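/- Let ζ_p = e^{2πi/p} for an odd prime p. Then Π_{k=1}^{(p-1)/2} (ζ_p^k + ζ_p^{-k}) = (2/p), the Legendre symbol of 2 modulo p. -/

import Mathlib

open Complex

/-- `Π_{k=1}^{(p-1)/2} (ζ_p^k + ζ_p^{-k}) = (2/p)`, where `ζ_p = e^{2πi/p}`
and `(2/p)` is the Legendre symbol of `2` mod `p`. -/
theorem stmt_16 (p : ℕ) [Fact p.Prime] (hp : p ≠ 2) :
    (∏ k ∈ Finset.Icc 1 ((p - 1) / 2),
      (Complex.exp (2 * Real.pi * Complex.I / p) ^ (k : ℤ) +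
        Complex.exp (2 * Real.pi * Complex.I / p) ^ (-(k : ℤ))))
      = ((legendreSym p 2 : ℤ) : ℂ) := by
  have hprime := (Fact.out : p.Prime)
  have hodd : p % 2 = 1 := hprime.eq_two_or_odd.resolve_left hp
  have hp3 : 3 ≤ p := by
    have := hprime.two_le; omega
  obtain ⟨m, hm⟩ : ∃ m, p = 2 * m + 1 := ⟨p / 2, by omega⟩
  have hm1 : 1 ≤ m := by omega
  have hmeq : (p - 1) / 2 = m := by omega
  have hp2 : p / 2 = m := by omega
  have hp0 : p ≠ 0 := by omega
  set ζ : ℂ := Complex.exp (2 * Real.pi * Complex.I / p) with hζdef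
  have hprim : IsPrimitiveRoot ζ p := by
    exact Complex.isPrimitiveRoot_exp p hp0
  have hζp : ζ ^ p = 1 := hprim.pow_eq_one
  -- f j = ζ^j - ζ^(p-j)
  set f : ℕ → ℂ := fun j => ζ ^ j - ζ ^ (p - j) with hfdef
  have hfne : ∀ j ∈ Finset.Icc 1 m, f j ≠ 0 := by
    intro j hj hcontra
    rw [Finset.mem_Icc] at hj
    have heq : ζ ^ j = ζ ^ (p - j) := sub_eq_zero.mp hcontra
    have h2j : ζ ^ (2 * j) = 1 := by
      calc ζ ^ (2 * j) = ζ ^ j * ζ ^ j := by rw [two_mul, pow_add]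
        _ = ζ ^ (p - j) * ζ ^ j := by rw [heq]
        _ = ζ ^ (p - j + j) := by rw [pow_add]
        _ = ζ ^ p := by congr 1; omega
        _ = 1 := hζp
    have hdvd := (hprim.pow_eq_one_iff_dvd (2 * j)).mp h2j
    have := Nat.le_of_dvd (by omega) hdvd
    omega
  set σ : ℕ → ℕ := fun k => if 2 * k ≤ m then 2 * k else p - 2 * k with hσdef
  have hζinv : ∀ k ∈ Finset.Icc 1 m, ζ ^ (-(k : ℤ)) = ζ ^ (p - k) := by
    intro k hk
    rw [Finset.mem_Icc] at hk
    rw [zpow_neg, zpow_natCast]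
    rw [inv_eq_of_mul_eq_one_left (a := ζ ^ (p - k)) (by
      rw [← pow_add]
      have h : p - k + k = p := by omega
      rw [h, hζp])]
  -- key identity
  have key : ∀ k ∈ Finset.Icc 1 m,
      (ζ ^ (k : ℤ) + ζ ^ (-(k : ℤ))) * f k
        = (if 2 * k ≤ m then (1 : ℂ) else -1) * f (σ k) := by
    intro k hk
    have hkm := Finset.mem_Icc.mp hk
    rw [hζinv k hk, zpow_natCast]
    have e1 : ζ ^ k * ζ ^ k = ζ ^ (2 * k) := by
      rw [← pow_add]; congr 1; omega
    have e2 : ζ ^ (p - k) * ζ ^ (p - k) = ζ ^ (p - 2 * k) := by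
      rw [← pow_add]
      have h : p - k + (p - k) = p + (p - 2 * k) := by omega
      rw [h, pow_add, hζp, one_mul]
    have hexpand : (ζ ^ k + ζ ^ (p - k)) * f k = ζ ^ (2 * k) - ζ ^ (p - 2 * k) := by
      calc (ζ ^ k + ζ ^ (p - k)) * f k
          = ζ ^ k * ζ ^ k - ζ ^ (p - k) * ζ ^ (p - k) := by
            simp only [hfdef]; ring
        _ = ζ ^ (2 * k) - ζ ^ (p - 2 * k) := by rw [e1, e2]
    rw [hexpand]
    by_cases h2k : 2 * k ≤ m
    · rw [if_pos h2k, one_mul]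
      simp only [hσdef, if_pos h2k]
      rfl
    · rw [if_neg h2k]
      simp only [hσdef, if_neg h2k, hfdef]
      have h : p - (p - 2 * k) = 2 * k := by omega
      rw [h]; ring
  -- the folding map is a bijection of Icc 1 m
  have hmaps : ∀ k ∈ Finset.Icc 1 m, σ k ∈ Finset.Icc 1 m := by
    intro k hk
    rw [Finset.mem_Icc] at *
    simp only [hσdef]
    split_ifs with h <;> omega
  have hinj : ∀ a ∈ Finset.Icc 1 m, ∀ b ∈ Finset.Icc 1 m, σ a = σ b → a = b := by
    intro a ha b hb hab
    rw [Finset.mem_Icc] at ha hb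
    simp only [hσdef] at hab
    split_ifs at hab <;> omega
  have hsurj : ∀ b ∈ Finset.Icc 1 m, ∃ a, ∃ ha : a ∈ Finset.Icc 1 m, σ a = b := by
    have := Finset.surj_on_of_inj_on_of_card_le (s := Finset.Icc 1 m) (t := Finset.Icc 1 m)
      (fun a _ => σ a) (fun a ha => hmaps a ha)
      (fun a₁ a₂ ha₁ ha₂ h => hinj a₁ ha₁ a₂ ha₂ h) le_rfl
    intro b hb
    obtain ⟨a, ha, h⟩ := this b hb
    exact ⟨a, ha, h.symm⟩
  have hprodσ : ∏ k ∈ Finset.Icc 1 m, f (σ k) = ∏ k ∈ Finset.Icc 1 m, f k := by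
    apply Finset.prod_bij (fun a _ => σ a) hmaps hinj hsurj
    intro a _
    rfl
  -- putting it together
  set μ := ((Finset.Icc 1 m).filter (fun k => ¬ 2 * k ≤ m)).card with hμdef
  have hfprod_ne : ∏ k ∈ Finset.Icc 1 m, f k ≠ 0 := Finset.prod_ne_zero_iff.mpr hfne
  have hmain : (∏ k ∈ Finset.Icc 1 m, (ζ ^ (k : ℤ) + ζ ^ (-(k : ℤ))))
      * ∏ k ∈ Finset.Icc 1 m, f k = (-1 : ℂ) ^ μ * ∏ k ∈ Finset.Icc 1 m, f k := by
    rw [← Finset.prod_mul_distrib, Finset.prod_congr rfl key, Finset.prod_mul_distrib,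
      hprodσ, Finset.prod_ite, Finset.prod_const, Finset.prod_const, one_pow, one_mul]
  have hprodval : (∏ k ∈ Finset.Icc 1 m, (ζ ^ (k : ℤ) + ζ ^ (-(k : ℤ)))) = (-1 : ℂ) ^ μ :=
    mul_right_cancel₀ hfprod_ne hmain
  -- Gauss' lemma
  have h20 : ((2 : ℤ) : ZMod p) ≠ 0 := by
    intro h
    rw [show ((2 : ℤ) : ZMod p) = ((2 : ℕ) : ZMod p) by push_cast; ring,
      ZMod.natCast_eq_zero_iff] at h
    have := Nat.le_of_dvd (by norm_num) h
    omega
  have hgauss := ZMod.gauss_lemma (p := p) (a := 2) hp h20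
  have hcard : ((Finset.Ico 1 (p / 2).succ).filter
      (fun x : ℕ => p / 2 < (((2 : ℤ) : ZMod p) * (Nat.cast x : ZMod p)).val)).card = μ := by
    rw [hμdef]
    have hIcc : Finset.Ico 1 (p / 2).succ = Finset.Icc 1 m := by
      rw [hp2, Nat.succ_eq_add_one, Finset.Ico_add_one_right_eq_Icc]
    rw [hIcc]
    apply Finset.card_bij (fun x _ => x)
    · intro x hx
      rw [Finset.mem_filter] at *
      obtain ⟨hx1, hx2⟩ := hx
      refine ⟨hx1, ?_⟩
      rw [Finset.mem_Icc] at hx1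
      have hval : ((2 : ℤ) * (x : ZMod p) : ZMod p).val = 2 * x := by
        rw [show ((2 : ℤ) * (x : ZMod p) : ZMod p) = ((2 * x : ℕ) : ZMod p) by push_cast; ring]
        rw [ZMod.val_natCast, Nat.mod_eq_of_lt (by omega)]
      rw [hval, hp2] at hx2
      omega
    · intro a b _ _ h; exact h
    · intro b hb
      refine ⟨b, ?_, rfl⟩
      rw [Finset.mem_filter] at *
      obtain ⟨hb1, hb2⟩ := hb
      refine ⟨hb1, ?_⟩
      rw [Finset.mem_Icc] at hb1
      have hval : ((2 : ℤ) * (b : ZMod p) : ZMod p).val = 2 * b := by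
        rw [show ((2 : ℤ) * (b : ZMod p) : ZMod p) = ((2 * b : ℕ) : ZMod p) by push_cast; ring]
        rw [ZMod.val_natCast, Nat.mod_eq_of_lt (by omega)]
      rw [hval, hp2]
      omega
  rw [hmeq, hprodval, hgauss, hcard]
  push_cast
  ring
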